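/- Let 0<p<∞ and φ∈𝒢_p with φ(1)=1 and lim_{t→0+} φ(t)=0. If lim_{t→∞} t^{-n/p} φ(t) = c for some c>0, then 𝔈_G ℳ_{φ,p}(ℝ^n)(t) ∼ t^{-1/p} for t>0, i.e. there exist constants 0<c_1≤c_2 with c_1 t^{-1/p} ≤ 𝔈_G ℳ_{φ,p}(ℝ^n)(t) ≤ c_2 t^{-1/p} for all t>0. -/

import Mathlib

open MeasureTheory Filter Set ENNReal

noncomputable section

abbrev En (n : ℕ) := EuclideanSpace ℝ (Fin n)

/-- The class `𝒢_p`: nondecreasing positive functions on `(0,∞)` such that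
`t ↦ φ(t) t^{-n/p}` is nonincreasing. -/
def GClass (n : ℕ) (p : ℝ) (φ : ℝ → ℝ) : Prop :=
  (∀ t : ℝ, 0 < t → 0 < φ t) ∧
    ∀ t r : ℝ, 0 < t → t ≤ r → φ t ≤ φ r ∧ φ r ≤ φ t * (r / t) ^ ((n : ℝ) / p)

/-- The axis-parallel compact cube centred at `x` with side length `r`. -/
def cube (n : ℕ) (x : En n) (r : ℝ) : Set (En n) := {y | ∀ i, |y i - x i| ≤ r / 2}

/-- The generalised Morrey quasi-norm `‖f | ℳ_{φ,p}(ℝⁿ)‖`. -/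
def morreyNorm {F : Type*} [NormedAddCommGroup F] (n : ℕ) (p : ℝ) (φ : ℝ → ℝ)
    (f : En n → F) : ℝ≥0∞ :=
  ⨆ (x : En n) (r : ℝ) (_ : 0 < r),
    ENNReal.ofReal (φ r) *
      ((volume (cube n x r))⁻¹ *
        ∫⁻ y in cube n x r, ENNReal.ofReal (‖f y‖ ^ p)) ^ (1 / p)

/-- The decreasing rearrangement `f*(t) = inf{σ>0 : |{x : |f(x)|>σ}| ≤ t}`. -/
def rearr {F : Type*} [NormedAddCommGroup F] (n : ℕ) (f : En n → F) (t : ℝ) : ℝ≥0∞ :=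
  sInf {σ : ℝ≥0∞ | 0 < σ ∧ volume {x : En n | σ < ENNReal.ofReal ‖f x‖} ≤ ENNReal.ofReal t}

/-- The growth envelope function of the generalised Morrey space `ℳ_{φ,p}(ℝⁿ)`. -/
def morreyEnvelope (n : ℕ) (p : ℝ) (φ : ℝ → ℝ) (t : ℝ) : ℝ≥0∞ :=
  ⨆ (f : En n → ℝ) (_ : Measurable f) (_ : morreyNorm n p φ f ≤ 1), rearr n f t

end


noncomputable section

def ctr (n : ℕ) (D : ℝ) (j : ℕ) : En n := WithLp.toLp 2 (fun i => if (i : ℕ) = 0 then (j : ℝ) * D else 0)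

lemma cube_eq (n : ℕ) (x : En n) (r : ℝ) :
    cube n x r = (MeasurableEquiv.toLp 2 (Fin n → ℝ)).symm ⁻¹'
      (Set.univ.pi fun i => Icc (x i - r/2) (x i + r/2)) := by
  ext y
  simp only [cube, mem_setOf_eq, mem_preimage, Set.mem_pi, mem_univ, forall_true_left,
    mem_Icc, MeasurableEquiv.coe_toLp_symm]
  constructor
  · intro h i; have := abs_le.1 (h i); constructor <;> linarith [this.1, this.2]
  · intro h i; rw [abs_le]; have := h i; constructor <;> linarith [this.1, this.2]

lemma measurableSet_cube (n : ℕ) (x : En n) (r : ℝ) : MeasurableSet (cube n x r) := by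
  rw [cube_eq]
  exact (MeasurableEquiv.toLp 2 (Fin n → ℝ)).symm.measurable
    (MeasurableSet.univ_pi fun i => measurableSet_Icc)

lemma volume_cube (n : ℕ) (x : En n) {r : ℝ} (hr : 0 ≤ r) :
    volume (cube n x r) = ENNReal.ofReal (r ^ n) := by
  rw [cube_eq, (EuclideanSpace.volume_preserving_symm_measurableEquiv_toLp (Fin n)).measure_preimage
    (MeasurableSet.univ_pi fun i => measurableSet_Icc).nullMeasurableSet]
  rw [volume_pi_pi]
  simp only [Real.volume_Icc]
  have : ∀ i : Fin n, x i + r/2 - (x i - r/2) = r := fun i => by ring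
  simp only [this]
  rw [Finset.prod_const, ← ENNReal.ofReal_pow hr]
  simp

lemma cube_mono (n : ℕ) (x : En n) {r r' : ℝ} (h : r ≤ r') : cube n x r ⊆ cube n x r' :=
  fun y hy i => le_trans (hy i) (by linarith)

lemma vol_inter_cube_le (n : ℕ) (a x : En n) {s r : ℝ} (hs : 0 ≤ s) (hr : 0 ≤ r) :
    volume (cube n a s ∩ cube n x r) ≤ ENNReal.ofReal (min r s ^ n) := by
  rcases le_total r s with h | h
  · calc volume (cube n a s ∩ cube n x r) ≤ volume (cube n x r) :=
        measure_mono inter_subset_right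
    _ = ENNReal.ofReal (r ^ n) := volume_cube n x hr
    _ = _ := by rw [min_eq_left h]
  · calc volume (cube n a s ∩ cube n x r) ≤ volume (cube n a s) :=
        measure_mono inter_subset_left
    _ = ENNReal.ofReal (s ^ n) := volume_cube n a hs
    _ = _ := by rw [min_eq_right h]


section
variable {n : ℕ}

lemma vol_inter_union_le (hn : 0 < n) {s D r : ℝ} (hs : 0 < s) (hD : 0 < D) (hr : 0 < r)
    (N : ℕ) (x : En n) :
    volume ((⋃ j ∈ Finset.range N, cube n (ctr n D j) s) ∩ cube n x r)
      ≤ ENNReal.ofReal (min (N : ℝ) ((r + s) / D + 1) * min r s ^ n) := by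
  set i₀ : Fin n := ⟨0, hn⟩
  set T : Finset ℕ := (Finset.range N).filter
    (fun j => |(j : ℝ) * D - x i₀| ≤ (r + s) / 2) with hT
  have hctr : ∀ j : ℕ, ctr n D j i₀ = (j : ℝ) * D := fun j => by simp [ctr, i₀]
  have hzero : ∀ j ∈ Finset.range N, j ∉ T →
      volume (cube n (ctr n D j) s ∩ cube n x r) = 0 := by
    intro j hj hjT
    have : cube n (ctr n D j) s ∩ cube n x r = ∅ := by
      rw [Set.eq_empty_iff_forall_notMem]
      rintro y ⟨hy1, hy2⟩
      apply hjT
      rw [hT, Finset.mem_filter]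
      refine ⟨hj, ?_⟩
      have h1 := hy1 i₀
      rw [hctr] at h1
      have h2 := hy2 i₀
      calc |(j : ℝ) * D - x i₀| ≤ |(j:ℝ)*D - y i₀| + |y i₀ - x i₀| := by
            simpa using abs_sub_le ((j:ℝ)*D) (y i₀) (x i₀)
        _ ≤ s/2 + r/2 := add_le_add (by rwa [abs_sub_comm] at h1) h2
        _ = (r+s)/2 := by ring
    simp [this]
  have hcard : (T.card : ℝ) ≤ min (N : ℝ) ((r + s) / D + 1) := by
    refine le_min ?_ ?_
    · exact_mod_cast le_trans (Finset.card_filter_le _ _) (le_of_eq (Finset.card_range N))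
    · rcases T.eq_empty_or_nonempty with h | h
      · simp [h]; positivity
      · set j₀ := T.min' h with hj₀
        set k := ⌊(r + s) / D⌋₊ with hk
        have hsub : T ⊆ Finset.Icc j₀ (j₀ + k) := by
          intro j hj
          rw [Finset.mem_Icc]
          refine ⟨T.min'_le j hj, ?_⟩
          have hjb : |(j : ℝ) * D - x i₀| ≤ (r + s)/2 := (Finset.mem_filter.1 hj).2
          have hj₀b : |(j₀ : ℝ) * D - x i₀| ≤ (r + s)/2 :=
            (Finset.mem_filter.1 (T.min'_mem h)).2
          have hdiff : ((j : ℝ) - j₀) * D ≤ r + s := by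
            have : ((j : ℝ) - j₀) * D ≤ |(j:ℝ)*D - (j₀:ℝ)*D| := by
              rw [show (j:ℝ)*D - (j₀:ℝ)*D = ((j:ℝ) - j₀)*D by ring]
              exact le_abs_self _
            calc ((j : ℝ) - j₀) * D ≤ |(j:ℝ)*D - (j₀:ℝ)*D| := this
              _ ≤ |(j:ℝ)*D - x i₀| + |x i₀ - (j₀:ℝ)*D| := by
                  simpa using abs_sub_le ((j:ℝ)*D) (x i₀) ((j₀:ℝ)*D)
              _ ≤ (r+s)/2 + (r+s)/2 := add_le_add hjb (by rwa [abs_sub_comm] at hj₀b)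
              _ = r + s := by ring
          have hle : j₀ ≤ j := T.min'_le j hj
          have : ((j - j₀ : ℕ) : ℝ) ≤ (r + s) / D := by
            rw [Nat.cast_sub hle, le_div_iff₀ hD]
            exact hdiff
          have := Nat.le_floor this
          omega
        calc (T.card : ℝ) ≤ ((Finset.Icc j₀ (j₀ + k)).card : ℝ) := by
              exact_mod_cast Finset.card_le_card hsub
          _ = (k : ℝ) + 1 := by
              rw [Nat.card_Icc, show j₀ + k + 1 - j₀ = k + 1 by omega]
              push_cast; ring
          _ ≤ (r + s) / D + 1 := by
              have := Nat.floor_le (a := (r+s)/D) (by positivity)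
              linarith
  calc volume ((⋃ j ∈ Finset.range N, cube n (ctr n D j) s) ∩ cube n x r)
      = volume (⋃ j ∈ Finset.range N, (cube n (ctr n D j) s ∩ cube n x r)) := by
        rw [Set.iUnion₂_inter]
    _ ≤ ∑ j ∈ Finset.range N, volume (cube n (ctr n D j) s ∩ cube n x r) :=
        measure_biUnion_finset_le _ _
    _ = ∑ j ∈ T, volume (cube n (ctr n D j) s ∩ cube n x r) := by
        rw [hT]
        refine (Finset.sum_filter_of_ne (fun j hj hne => ?_)).symm
        by_contra hmem
        exact hne (hzero j hj (by simp [hT, Finset.mem_filter]; intro _; simpa using hmem))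
    _ ≤ ∑ j ∈ T, ENNReal.ofReal (min r s ^ n) := by
        refine Finset.sum_le_sum fun j hj => ?_
        exact vol_inter_cube_le n _ x hs.le hr.le
    _ = (T.card : ℝ≥0∞) * ENNReal.ofReal (min r s ^ n) := by
        rw [Finset.sum_const, nsmul_eq_mul]
    _ ≤ ENNReal.ofReal (min (N : ℝ) ((r + s) / D + 1) * min r s ^ n) := by
        rw [← ENNReal.ofReal_natCast, ← ENNReal.ofReal_mul (by positivity)]
        apply ENNReal.ofReal_le_ofReal
        apply mul_le_mul_of_nonneg_right hcard (by positivity)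
end

lemma vol_union (hn : 0 < n) {s D : ℝ} (hs : 0 < s) (hsD : s < D) (N : ℕ) :
    volume (⋃ j ∈ Finset.range N, cube n (ctr n D j) s)
      = ENNReal.ofReal ((N : ℝ) * s ^ n) := by
  set i₀ : Fin n := ⟨0, hn⟩
  have hctr : ∀ j : ℕ, ctr n D j i₀ = (j : ℝ) * D := fun j => by simp [ctr, i₀]
  rw [measure_biUnion_finset ?_ (fun j _ => measurableSet_cube n _ s)]
  · rw [Finset.sum_congr rfl (fun j _ => volume_cube n (ctr n D j) hs.le),
      Finset.sum_const, Finset.card_range, nsmul_eq_mul,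
      ← ENNReal.ofReal_natCast, ← ENNReal.ofReal_mul (by positivity)]
  · intro i _ j _ hij
    rw [Function.onFun, Set.disjoint_left]
    intro y hyi hyj
    have h1 := hyi i₀; rw [hctr] at h1
    have h2 := hyj i₀; rw [hctr] at h2
    have habs : |(i : ℝ) * D - (j : ℝ) * D| ≤ s := by
      calc |(i : ℝ) * D - (j:ℝ)*D| ≤ |(i:ℝ)*D - y i₀| + |y i₀ - (j:ℝ)*D| := by
            simpa using abs_sub_le ((i:ℝ)*D) (y i₀) ((j:ℝ)*D)
        _ ≤ s/2 + s/2 := add_le_add (by rwa [abs_sub_comm] at h1) h2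
        _ = s := by ring
    have hge : D ≤ |(i : ℝ) * D - (j : ℝ) * D| := by
      have h1 : (1 : ℝ) ≤ |(i : ℝ) - (j : ℝ)| := by
        have : ((i : ℤ) - (j : ℤ)) ≠ 0 := sub_ne_zero.2 (by exact_mod_cast hij)
        have := Int.one_le_abs this
        calc (1:ℝ) = ((1:ℤ):ℝ) := by norm_num
          _ ≤ ((|(i:ℤ) - (j:ℤ)| : ℤ) : ℝ) := by exact_mod_cast this
          _ = |(i:ℝ) - (j:ℝ)| := by push_cast; ring_nf
      calc D = 1 * D := (one_mul D).symm
        _ ≤ |(i:ℝ) - (j:ℝ)| * D := mul_le_mul_of_nonneg_right h1 (by linarith)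
        _ = |(i:ℝ) - (j:ℝ)| * |D| := by rw [abs_of_pos (by linarith : (0:ℝ) < D)]
        _ = |((i:ℝ) - (j:ℝ)) * D| := (abs_mul _ _).symm
        _ = |(i : ℝ) * D - (j : ℝ) * D| := by ring_nf
    linarith

lemma rearr_ge_of_indicator {S : Set (En n)} {A t : ℝ} (hA : 0 < A)
    (hvol : ENNReal.ofReal t < volume S) :
    ENNReal.ofReal A ≤ rearr n (S.indicator fun _ => A) t := by
  apply le_sInf
  rintro σ ⟨hσpos, hσvol⟩
  by_contra hcon
  push_neg at hcon
  have hsub : S ⊆ {x : En n | σ < ENNReal.ofReal ‖S.indicator (fun _ => A) x‖} := by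
    intro x hx
    simp only [mem_setOf_eq, Set.indicator_of_mem hx, Real.norm_eq_abs, abs_of_pos hA]
    exact hcon
  exact absurd (lt_of_lt_of_le hvol (le_trans (measure_mono hsub) hσvol)) (lt_irrefl _)

lemma morreyNorm_indicator_le (hn : 0 < n) {p : ℝ} (hp : 0 < p) (φ : ℝ → ℝ)
    (hφpos : ∀ r : ℝ, 0 < r → 0 < φ r) {s D A : ℝ} (hs : 0 < s) (hD : 0 < D) (hA : 0 < A)
    (N : ℕ)
    (key : ∀ r : ℝ, 0 < r →
      φ r ^ p * A ^ p * (min (N : ℝ) ((r + s) / D + 1) * min r s ^ n) ≤ r ^ n) :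
    morreyNorm n p φ
      ((⋃ j ∈ Finset.range N, cube n (ctr n D j) s).indicator fun _ => A) ≤ 1 := by
  set S := ⋃ j ∈ Finset.range N, cube n (ctr n D j) s with hSdef
  have hS : MeasurableSet S :=
    Finset.measurableSet_biUnion _ fun j _ => measurableSet_cube n _ s
  rw [morreyNorm]
  refine iSup_le fun x => iSup_le fun r => iSup_le fun hr => ?_
  have hφr := hφpos r hr
  have hint : (∫⁻ y in cube n x r, ENNReal.ofReal (‖S.indicator (fun _ => A) y‖ ^ p))
      = ENNReal.ofReal (A ^ p) * volume (S ∩ cube n x r) := by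
    have h1 : ∀ y : En n, ENNReal.ofReal (‖S.indicator (fun _ => A) y‖ ^ p)
        = S.indicator (fun _ => ENNReal.ofReal (A ^ p)) y := by
      intro y
      by_cases hy : y ∈ S
      · simp [Set.indicator_of_mem hy, Real.norm_eq_abs, abs_of_pos hA]
      · simp [Set.indicator_of_notMem hy, Real.zero_rpow hp.ne']
    simp_rw [h1]
    rw [lintegral_indicator hS, Measure.restrict_restrict hS, setLIntegral_const]
  rw [hint, volume_cube n x hr.le]
  set m : ℝ := min (N : ℝ) ((r + s) / D + 1) * min r s ^ n with hm
  have hmin : (0:ℝ) < min r s := lt_min hr hs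
  have hm0 : 0 ≤ m := by
    apply mul_nonneg _ (pow_nonneg hmin.le n)
    refine le_min (Nat.cast_nonneg N) (by positivity)
  have hV : volume (S ∩ cube n x r) ≤ ENNReal.ofReal m :=
    vol_inter_union_le hn hs hD hr N x
  have inside_le : ENNReal.ofReal (φ r ^ p) *
      ((ENNReal.ofReal (r ^ n))⁻¹ *
        (ENNReal.ofReal (A ^ p) * volume (S ∩ cube n x r))) ≤ 1 := by
    have hb : ENNReal.ofReal (φ r ^ p) * (ENNReal.ofReal (A ^ p) * volume (S ∩ cube n x r))
        ≤ ENNReal.ofReal (φ r ^ p * A ^ p * m) := by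
      calc ENNReal.ofReal (φ r ^ p) * (ENNReal.ofReal (A ^ p) * volume (S ∩ cube n x r))
          ≤ ENNReal.ofReal (φ r ^ p) * (ENNReal.ofReal (A ^ p) * ENNReal.ofReal m) :=
            mul_le_mul_right (mul_le_mul_right hV _) _
        _ = ENNReal.ofReal (φ r ^ p * A ^ p * m) := by
            rw [← ENNReal.ofReal_mul (Real.rpow_nonneg hA.le p),
              ← ENNReal.ofReal_mul (Real.rpow_nonneg hφr.le p), mul_assoc]
    calc ENNReal.ofReal (φ r ^ p) *
        ((ENNReal.ofReal (r ^ n))⁻¹ * (ENNReal.ofReal (A ^ p) * volume (S ∩ cube n x r)))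
        = (ENNReal.ofReal (φ r ^ p) * (ENNReal.ofReal (A ^ p) * volume (S ∩ cube n x r)))
            / ENNReal.ofReal (r ^ n) := by
          rw [div_eq_mul_inv]; ring
      _ ≤ ENNReal.ofReal (φ r ^ p * A ^ p * m) / ENNReal.ofReal (r ^ n) :=
          ENNReal.div_le_div_right hb _
      _ ≤ 1 := ENNReal.div_le_of_le_mul (by
          rw [one_mul]
          exact ENNReal.ofReal_le_ofReal (key r hr))
  have key2 : ENNReal.ofReal (φ r) = (ENNReal.ofReal (φ r ^ p)) ^ (1/p) := by
    rw [ENNReal.ofReal_rpow_of_pos (Real.rpow_pos_of_pos hφr p), ← Real.rpow_mul hφr.le,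
      mul_one_div_cancel hp.ne', Real.rpow_one]
  calc ENNReal.ofReal (φ r) *
      ((ENNReal.ofReal (r ^ n))⁻¹ * (ENNReal.ofReal (A ^ p) * volume (S ∩ cube n x r))) ^ (1/p)
      = (ENNReal.ofReal (φ r ^ p) *
        ((ENNReal.ofReal (r ^ n))⁻¹ * (ENNReal.ofReal (A ^ p) * volume (S ∩ cube n x r)))) ^ (1/p) := by
        rw [key2, ← ENNReal.mul_rpow_of_nonneg _ _ (by positivity : (0:ℝ) ≤ 1/p)]
    _ ≤ 1 ^ (1/p) := ENNReal.rpow_le_rpow inside_le (by positivity)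
    _ = 1 := ENNReal.one_rpow _


section PhiFacts
variable {n : ℕ} {p : ℝ} {φ : ℝ → ℝ} {c : ℝ}

lemma GClass.pos (hφ : GClass n p φ) {r : ℝ} (hr : 0 < r) : 0 < φ r := hφ.1 r hr

lemma GClass.mono (hφ : GClass n p φ) {u v : ℝ} (hu : 0 < u) (huv : u ≤ v) : φ u ≤ φ v :=
  (hφ.2 u v hu huv).1

lemma GClass.grow (hφ : GClass n p φ) {u v : ℝ} (hu : 0 < u) (huv : u ≤ v) :
    φ v ≤ φ u * (v / u) ^ ((n : ℝ) / p) := (hφ.2 u v hu huv).2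

/-- `(x ^ (n/p)) ^ p = x ^ n` for `x > 0`. -/
lemma rpow_q_pow {x : ℝ} (hx : 0 < x) (hp : 0 < p) :
    (x ^ ((n : ℝ) / p)) ^ p = x ^ n := by
  rw [← Real.rpow_natCast x n, ← Real.rpow_mul hx.le]
  congr 1
  field_simp

lemma GClass.ratio_anti (hφ : GClass n p φ) (hp : 0 < p) {u v : ℝ} (hu : 0 < u)
    (huv : u ≤ v) : φ v / v ^ ((n : ℝ) / p) ≤ φ u / u ^ ((n : ℝ) / p) := by
  have hv : 0 < v := lt_of_lt_of_le hu huv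
  have hvq : (0:ℝ) < v ^ ((n : ℝ) / p) := Real.rpow_pos_of_pos hv _
  have huq : (0:ℝ) < u ^ ((n : ℝ) / p) := Real.rpow_pos_of_pos hu _
  rw [div_le_div_iff₀ hvq huq]
  have := hφ.grow hu huv
  have hdiv : (v / u) ^ ((n : ℝ) / p) = v ^ ((n : ℝ) / p) / u ^ ((n : ℝ) / p) :=
    Real.div_rpow hv.le hu.le _
  rw [hdiv] at this
  calc φ v * u ^ ((n : ℝ) / p)
      ≤ (φ u * (v ^ ((n : ℝ) / p) / u ^ ((n : ℝ) / p))) * u ^ ((n : ℝ) / p) :=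
        mul_le_mul_of_nonneg_right this huq.le
    _ = φ u * v ^ ((n : ℝ) / p) := by field_simp
lemma clb (hφ : GClass n p φ) (hp : 0 < p)
    (hten : Tendsto (fun t : ℝ => φ t / t ^ ((n : ℝ) / p)) atTop (nhds c)) :
    ∀ r : ℝ, 0 < r → c * r ^ ((n : ℝ) / p) ≤ φ r := by
  intro r hr
  have h1 : c ≤ φ r / r ^ ((n : ℝ) / p) := by
    refine le_of_tendsto hten (eventually_atTop.2 ⟨r, fun u hu => ?_⟩)
    exact hφ.ratio_anti hp hr hu
  have hrq : (0:ℝ) < r ^ ((n : ℝ) / p) := Real.rpow_pos_of_pos hr _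
  calc c * r ^ ((n : ℝ) / p) ≤ (φ r / r ^ ((n : ℝ) / p)) * r ^ ((n : ℝ) / p) :=
        mul_le_mul_of_nonneg_right h1 hrq.le
    _ = φ r := by field_simp

lemma exists_D (hc : 0 < c)
    (hten : Tendsto (fun t : ℝ => φ t / t ^ ((n : ℝ) / p)) atTop (nhds c)) :
    ∃ D : ℝ, 2 ≤ D ∧ ∀ r : ℝ, D ≤ r → φ r ≤ 2 * c * r ^ ((n : ℝ) / p) := by
  have hev : ∀ᶠ u in atTop, φ u / u ^ ((n : ℝ) / p) < 2 * c :=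
    hten.eventually_lt_const (by linarith)
  obtain ⟨D₀, hD₀⟩ := eventually_atTop.1 hev
  refine ⟨max 2 D₀, le_max_left _ _, fun r hr => ?_⟩
  have h1 : φ r / r ^ ((n : ℝ) / p) < 2 * c := hD₀ r (le_trans (le_max_right _ _) hr)
  have hrpos : (0:ℝ) < r := lt_of_lt_of_le (by norm_num : (0:ℝ) < 2)
    (le_trans (le_max_left _ _) hr)
  have hrq : (0:ℝ) < r ^ ((n : ℝ) / p) := Real.rpow_pos_of_pos hrpos _
  calc φ r = (φ r / r ^ ((n : ℝ) / p)) * r ^ ((n : ℝ) / p) := by field_simp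
    _ ≤ 2 * c * r ^ ((n : ℝ) / p) := mul_le_mul_of_nonneg_right h1.le hrq.le

lemma exists_s (hn : 0 < n) (hp : 0 < p) (hφ : GClass n p φ) (hφ1 : φ 1 = 1)
    (hφ0 : Tendsto φ (nhdsWithin 0 (Set.Ioi 0)) (nhds 0)) {t : ℝ} (ht : 0 < t)
    (ht1 : t ≤ 1) :
    ∃ s : ℝ, 0 < s ∧ s ≤ 1 ∧ t ≤ φ s ^ p ∧ φ s ^ p ≤ 4 ^ n * t := by
  set q : ℝ := (n : ℝ) / p with hq
  set τ : ℝ := t ^ (1/p) with hτ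
  have hτpos : 0 < τ := Real.rpow_pos_of_pos ht _
  have hτ1 : τ ≤ 1 := Real.rpow_le_one ht.le ht1 (by positivity)
  set E : Set ℝ := {u : ℝ | u ∈ Set.Ioc (0:ℝ) 1 ∧ τ ≤ φ u} with hE
  have h1E : (1:ℝ) ∈ E := ⟨⟨one_pos, le_refl 1⟩, by rw [hφ1]; exact hτ1⟩
  have hev : ∀ᶠ u in nhdsWithin 0 (Set.Ioi 0), φ u < τ := hφ0.eventually_lt_const hτpos
  rw [eventually_nhdsWithin_iff, Metric.eventually_nhds_iff] at hev
  obtain ⟨δ, hδpos, hδ⟩ := hev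
  have hlb : ∀ u ∈ E, δ/2 ≤ u := by
    intro u hu
    by_contra hcon
    push_neg at hcon
    have hu0 : 0 < u := hu.1.1
    have : φ u < τ := hδ (by
      rw [Real.dist_eq, sub_zero, abs_of_pos hu0]; linarith) hu0
    exact absurd hu.2 (not_le.2 this)
  have hbdd : BddBelow E := ⟨δ/2, hlb⟩
  have hne : E.Nonempty := ⟨1, h1E⟩
  set s₀ := sInf E with hs₀
  have hs₀pos : 0 < s₀ := lt_of_lt_of_le (by linarith) (le_csInf hne hlb)
  have hs₀1 : s₀ ≤ 1 := csInf_le hbdd h1E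
  obtain ⟨s, hsE, hs2⟩ : ∃ s ∈ E, s < 2 * s₀ :=
    exists_lt_of_csInf_lt hne (by linarith)
  have hss₀ : s₀ ≤ s := csInf_le hbdd hsE
  have hspos : 0 < s := hsE.1.1
  have hs1 : s ≤ 1 := hsE.1.2
  have hs' : φ (s₀/2) < τ := by
    have hnotE : s₀/2 ∉ E := notMem_of_lt_csInf (by linarith) hbdd
    by_contra hcon
    push_neg at hcon
    exact hnotE ⟨⟨by linarith, by linarith⟩, hcon⟩
  -- φ s ≤ φ(s₀/2) * (s/(s₀/2))^q ≤ τ * 4^q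
  have hgrow := hφ.grow (u := s₀/2) (v := s) (by linarith) (by linarith)
  have hratio : s / (s₀/2) ≤ 4 := by
    rw [div_le_iff₀ (by linarith)]
    linarith
  have hratio0 : 0 < s / (s₀/2) := by positivity
  have hφs : φ s ≤ τ * 4 ^ q := by
    calc φ s ≤ φ (s₀/2) * (s / (s₀/2)) ^ q := hgrow
      _ ≤ τ * 4 ^ q := by
          apply mul_le_mul hs'.le (Real.rpow_le_rpow hratio0.le hratio (by positivity))
            (Real.rpow_nonneg hratio0.le _) hτpos.le
  have hφspos : 0 < φ s := hφ.pos hspos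
  refine ⟨s, hspos, hs1, ?_, ?_⟩
  · have : τ ≤ φ s := hsE.2
    calc t = τ ^ p := by
          rw [hτ, ← Real.rpow_mul ht.le, one_div_mul_cancel hp.ne', Real.rpow_one]
      _ ≤ φ s ^ p := Real.rpow_le_rpow hτpos.le this hp.le
  · calc φ s ^ p ≤ (τ * 4 ^ q) ^ p := Real.rpow_le_rpow hφspos.le hφs hp.le
      _ = τ ^ p * (4 ^ q) ^ p := Real.mul_rpow hτpos.le (by positivity)
      _ = t * 4 ^ n := by
          rw [rpow_q_pow (by norm_num : (0:ℝ) < 4) hp,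
            hτ, ← Real.rpow_mul ht.le, one_div_mul_cancel hp.ne', Real.rpow_one]
      _ = 4 ^ n * t := mul_comm _ _
end PhiFacts

section KeyIneq
variable {n : ℕ} {p : ℝ} {φ : ℝ → ℝ} {c : ℝ}

/-- The master constant. -/
noncomputable def Kp (p c : ℝ) : ℝ := max 3 ((2*c) ^ p * (1 + 1/c ^ p))

lemma Kp_pos (hp : 0 < p) (hc : 0 < c) : 0 < Kp p c := lt_of_lt_of_le (by norm_num) (le_max_left _ _)

lemma Kp_ge_three : (3:ℝ) ≤ Kp p c := le_max_left _ _

lemma key_master (hp : 0 < p) (hφ : GClass n p φ) (hc : 0 < c)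
    (hclb : ∀ r : ℝ, 0 < r → c * r ^ ((n : ℝ) / p) ≤ φ r)
    {D : ℝ} (hD2 : 2 ≤ D) (hDub : ∀ r : ℝ, D ≤ r → φ r ≤ 2 * c * r ^ ((n : ℝ) / p))
    {s : ℝ} (hs : 0 < s) (hs1 : s ≤ 1) {N : ℕ}
    (hNs : (N : ℝ) * s ^ n ≤ (1 + 1/c ^ p) * φ s ^ p) :
    ∀ r : ℝ, 0 < r →
      φ r ^ p * (min (N : ℝ) ((r + s) / D + 1) * min r s ^ n) ≤ Kp p c * φ s ^ p * r ^ n := by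
  intro r hr
  have hφs : 0 < φ s := hφ.pos hs
  have hφr : 0 < φ r := hφ.pos hr
  have hφsp : (0:ℝ) < φ s ^ p := Real.rpow_pos_of_pos hφs p
  have hφrp : (0:ℝ) < φ r ^ p := Real.rpow_pos_of_pos hφr p
  have hrn : (0:ℝ) < r ^ n := pow_pos hr n
  have hsn : (0:ℝ) < s ^ n := pow_pos hs n
  have hD0 : (0:ℝ) < D := by linarith
  rcases le_total r s with hrs | hsr
  · -- r ≤ s
    have hmin : min r s = r := min_eq_left hrs
    have hcount : min (N : ℝ) ((r + s) / D + 1) ≤ 2 := by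
      refine le_trans (min_le_right _ _) ?_
      have : (r + s) / D ≤ 1 := by
        rw [div_le_one hD0]; linarith
      linarith
    have hφ2 : φ r ^ p ≤ φ s ^ p := Real.rpow_le_rpow hφr.le (hφ.mono hr hrs) hp.le
    have hc0 : 0 ≤ min (N : ℝ) ((r + s) / D + 1) := le_min (by positivity) (by positivity)
    calc φ r ^ p * (min (N : ℝ) ((r + s) / D + 1) * min r s ^ n)
        ≤ φ s ^ p * (2 * r ^ n) := by
          rw [hmin]
          exact mul_le_mul hφ2 (mul_le_mul_of_nonneg_right hcount hrn.le)
            (mul_nonneg hc0 hrn.le) hφsp.le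
      _ ≤ Kp p c * φ s ^ p * r ^ n := by
          have h3 : (2:ℝ) ≤ Kp p c := le_trans (by norm_num) Kp_ge_three
          have := mul_le_mul_of_nonneg_right (mul_le_mul_of_nonneg_right h3 hφsp.le) hrn.le
          nlinarith [this]
  · -- s ≤ r
    have hmin : min r s = s := min_eq_right hsr
    have hgrow : φ r ^ p ≤ φ s ^ p * (r ^ n / s ^ n) := by
      have h1 : φ r ≤ φ s * (r/s) ^ ((n : ℝ) / p) := hφ.grow hs hsr
      have h2 : φ r ^ p ≤ (φ s * (r/s) ^ ((n : ℝ) / p)) ^ p :=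
        Real.rpow_le_rpow hφr.le h1 hp.le
      have h3 : (φ s * (r/s) ^ ((n : ℝ) / p)) ^ p = φ s ^ p * (r ^ n / s ^ n) := by
        rw [Real.mul_rpow hφs.le (Real.rpow_nonneg (by positivity) _),
          rpow_q_pow (by positivity) hp, div_pow]
      rw [h3] at h2; exact h2
    rcases le_total r D with hrD | hDr
    · -- s ≤ r ≤ D
      have hcount : min (N : ℝ) ((r + s) / D + 1) ≤ 3 := by
        refine le_trans (min_le_right _ _) ?_
        have : (r + s) / D ≤ 2 := by
          rw [div_le_iff₀ hD0]; linarith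
        linarith
      have hc0 : 0 ≤ min (N : ℝ) ((r + s) / D + 1) := le_min (by positivity) (by positivity)
      calc φ r ^ p * (min (N : ℝ) ((r + s) / D + 1) * min r s ^ n)
          ≤ (φ s ^ p * (r ^ n / s ^ n)) * (3 * s ^ n) := by
            rw [hmin]
            exact mul_le_mul hgrow (mul_le_mul_of_nonneg_right hcount hsn.le)
              (mul_nonneg hc0 hsn.le) (by positivity)
        _ = 3 * (φ s ^ p * r ^ n) := by field_simp
        _ ≤ Kp p c * φ s ^ p * r ^ n := by
            have h3 : (3:ℝ) ≤ Kp p c := Kp_ge_three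
            have := mul_le_mul_of_nonneg_right (mul_le_mul_of_nonneg_right h3 hφsp.le) hrn.le
            nlinarith [this]
    · -- D ≤ r
      have hub : φ r ^ p ≤ (2*c) ^ p * r ^ n := by
        have h1 : φ r ≤ 2 * c * r ^ ((n : ℝ) / p) := hDub r hDr
        have h2 : φ r ^ p ≤ (2 * c * r ^ ((n : ℝ) / p)) ^ p :=
          Real.rpow_le_rpow hφr.le h1 hp.le
        have h3 : (2 * c * r ^ ((n : ℝ) / p)) ^ p = (2*c) ^ p * r ^ n := by
          rw [Real.mul_rpow (by positivity) (Real.rpow_nonneg hr.le _), rpow_q_pow hr hp]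
        rw [h3] at h2; exact h2
      have hcount : min (N : ℝ) ((r + s) / D + 1) ≤ (N : ℝ) := min_le_left _ _
      have hc0 : 0 ≤ min (N : ℝ) ((r + s) / D + 1) := le_min (by positivity) (by positivity)
      have h2cp : (0:ℝ) < (2*c) ^ p := Real.rpow_pos_of_pos (by linarith) p
      calc φ r ^ p * (min (N : ℝ) ((r + s) / D + 1) * min r s ^ n)
          ≤ ((2*c) ^ p * r ^ n) * ((N : ℝ) * s ^ n) := by
            rw [hmin]
            exact mul_le_mul hub (mul_le_mul_of_nonneg_right hcount hsn.le)
              (mul_nonneg hc0 hsn.le) (by positivity)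
        _ ≤ ((2*c) ^ p * r ^ n) * ((1 + 1/c ^ p) * φ s ^ p) :=
            mul_le_mul_of_nonneg_left hNs (by positivity)
        _ = ((2*c) ^ p * (1 + 1/c ^ p)) * φ s ^ p * r ^ n := by ring
        _ ≤ Kp p c * φ s ^ p * r ^ n := by
            have h3 : (2*c) ^ p * (1 + 1/c ^ p) ≤ Kp p c := le_max_right _ _
            exact mul_le_mul_of_nonneg_right (mul_le_mul_of_nonneg_right h3 hφsp.le) hrn.le

lemma key_single (hp : 0 < p) (hφ : GClass n p φ) {s D : ℝ} (hs : 0 < s) (hD0 : 0 < D) :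
    ∀ r : ℝ, 0 < r →
      φ r ^ p * (min ((1:ℕ) : ℝ) ((r + s) / D + 1) * min r s ^ n) ≤ φ s ^ p * r ^ n := by
  intro r hr
  have hφs : 0 < φ s := hφ.pos hs
  have hφr : 0 < φ r := hφ.pos hr
  have hrn : (0:ℝ) < r ^ n := pow_pos hr n
  have hsn : (0:ℝ) < s ^ n := pow_pos hs n
  have hcount : min ((1:ℕ) : ℝ) ((r + s) / D + 1) ≤ 1 := by
    simpa using min_le_left ((1:ℕ) : ℝ) _
  have hc0 : 0 ≤ min ((1:ℕ) : ℝ) ((r + s) / D + 1) := le_min (by positivity) (by positivity)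
  rcases le_total r s with hrs | hsr
  · have hmin : min r s = r := min_eq_left hrs
    have hφ2 : φ r ^ p ≤ φ s ^ p := Real.rpow_le_rpow hφr.le (hφ.mono hr hrs) hp.le
    calc φ r ^ p * (min ((1:ℕ) : ℝ) ((r + s) / D + 1) * min r s ^ n)
        ≤ φ s ^ p * (1 * r ^ n) := by
          rw [hmin]
          exact mul_le_mul hφ2 (mul_le_mul_of_nonneg_right hcount hrn.le)
            (mul_nonneg hc0 hrn.le) (Real.rpow_pos_of_pos hφs p).le
      _ = φ s ^ p * r ^ n := by ring
  · have hmin : min r s = s := min_eq_right hsr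
    have hgrow : φ r ^ p ≤ φ s ^ p * (r ^ n / s ^ n) := by
      have h1 : φ r ≤ φ s * (r/s) ^ ((n : ℝ) / p) := hφ.grow hs hsr
      have h2 : φ r ^ p ≤ (φ s * (r/s) ^ ((n : ℝ) / p)) ^ p :=
        Real.rpow_le_rpow hφr.le h1 hp.le
      have h3 : (φ s * (r/s) ^ ((n : ℝ) / p)) ^ p = φ s ^ p * (r ^ n / s ^ n) := by
        rw [Real.mul_rpow hφs.le (Real.rpow_nonneg (by positivity) _),
          rpow_q_pow (by positivity) hp, div_pow]
      rw [h3] at h2; exact h2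
    calc φ r ^ p * (min ((1:ℕ) : ℝ) ((r + s) / D + 1) * min r s ^ n)
        ≤ (φ s ^ p * (r ^ n / s ^ n)) * (1 * s ^ n) := by
          rw [hmin]
          exact mul_le_mul hgrow (mul_le_mul_of_nonneg_right hcount hsn.le)
            (mul_nonneg hc0 hsn.le) (by positivity)
      _ = φ s ^ p * r ^ n := by field_simp
end KeyIneq

section Upper
variable {n : ℕ} {p : ℝ} {φ : ℝ → ℝ} {c : ℝ}

lemma envelope_upper (hn : 0 < n) (hp : 0 < p) (hφ : GClass n p φ) (hc : 0 < c)
    (hclb : ∀ r : ℝ, 0 < r → c * r ^ ((n : ℝ) / p) ≤ φ r) {t : ℝ} (ht : 0 < t) :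
    morreyEnvelope n p φ t ≤ ENNReal.ofReal (c⁻¹ * t ^ (-(1/p))) := by
  set a : ℝ := c⁻¹ * t ^ (-(1/p)) with ha_def
  have ha : 0 < a := by
    apply mul_pos (inv_pos.2 hc) (Real.rpow_pos_of_pos ht _)
  have hap : a ^ p = (c ^ p)⁻¹ * t⁻¹ := by
    rw [ha_def, Real.mul_rpow (inv_nonneg.2 hc.le) (Real.rpow_nonneg ht.le _),
      Real.inv_rpow hc.le, ← Real.rpow_mul ht.le, neg_mul, one_div,
      inv_mul_cancel₀ hp.ne', Real.rpow_neg_one]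
  rw [morreyEnvelope]
  refine iSup_le fun f => iSup_le fun hf => iSup_le fun hnorm => ?_
  set g : En n → ℝ≥0∞ := fun y => ENNReal.ofReal (‖f y‖ ^ p) with hg_def
  have hg : Measurable g := by
    have hgalt : g = fun y => (ENNReal.ofReal ‖f y‖) ^ p := by
      funext y
      simp only [hg_def]
      rw [← ENNReal.ofReal_rpow_of_nonneg (norm_nonneg _) hp.le]
    rw [hgalt]
    exact ENNReal.continuous_rpow_const.measurable.comp hf.norm.ennreal_ofReal
  -- Step 1: uniform bound for integrals over cubes
  have hcube : ∀ R : ℝ, 0 < R →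
      (∫⁻ y in cube n 0 R, g y) ≤ ENNReal.ofReal ((c ^ p)⁻¹) := by
    intro R hR
    have hterm : ENNReal.ofReal (φ R) *
        ((volume (cube n 0 R))⁻¹ * ∫⁻ y in cube n 0 R, g y) ^ (1/p) ≤ 1 := by
      refine le_trans ?_ hnorm
      rw [morreyNorm]
      exact le_iSup_of_le (0 : En n) (le_iSup_of_le R (le_iSup_of_le hR le_rfl))
    set B := (volume (cube n 0 R))⁻¹ * ∫⁻ y in cube n 0 R, g y with hB
    have hφR : 0 < φ R := hφ.pos hR
    have h1 : B ^ (1/p) ≤ (ENNReal.ofReal (φ R))⁻¹ := by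
      rw [ENNReal.le_inv_iff_mul_le, mul_comm]
      exact hterm
    have h2 : B ≤ (ENNReal.ofReal (φ R ^ p))⁻¹ := by
      have h3 : (B ^ (1/p)) ^ p ≤ ((ENNReal.ofReal (φ R))⁻¹) ^ p :=
        ENNReal.rpow_le_rpow h1 hp.le
      rw [← ENNReal.rpow_mul, one_div_mul_cancel hp.ne', ENNReal.rpow_one] at h3
      rwa [ENNReal.inv_rpow, ENNReal.ofReal_rpow_of_pos hφR] at h3
    have hvol : volume (cube n 0 R) = ENNReal.ofReal (R ^ n) := volume_cube n 0 hR.le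
    have hvne : ENNReal.ofReal (R ^ n) ≠ 0 := by
      simp [ENNReal.ofReal_eq_zero]; positivity
    have hint_eq : (∫⁻ y in cube n 0 R, g y) = ENNReal.ofReal (R ^ n) * B := by
      rw [hB, hvol, ← mul_assoc, ENNReal.mul_inv_cancel hvne ENNReal.ofReal_ne_top, one_mul]
    rw [hint_eq]
    calc ENNReal.ofReal (R ^ n) * B ≤ ENNReal.ofReal (R ^ n) * (ENNReal.ofReal (φ R ^ p))⁻¹ :=
          mul_le_mul_right h2 _
      _ = ENNReal.ofReal (R ^ n) / ENNReal.ofReal (φ R ^ p) := by rw [div_eq_mul_inv]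
      _ ≤ ENNReal.ofReal ((c ^ p)⁻¹) := by
          apply ENNReal.div_le_of_le_mul
          rw [← ENNReal.ofReal_mul (by positivity)]
          apply ENNReal.ofReal_le_ofReal
          have h4 : c ^ p * R ^ n ≤ φ R ^ p := by
            have h5 : (c * R ^ ((n:ℝ)/p)) ^ p ≤ φ R ^ p :=
              Real.rpow_le_rpow (by positivity) (hclb R hR) hp.le
            rwa [Real.mul_rpow hc.le (Real.rpow_nonneg hR.le _), rpow_q_pow hR hp] at h5
          have hcp : (0:ℝ) < c ^ p := Real.rpow_pos_of_pos hc p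
          rw [← mul_le_mul_iff_right₀ hcp]
          calc c ^ p * R ^ n ≤ φ R ^ p := h4
            _ = c ^ p * ((c ^ p)⁻¹ * φ R ^ p) := by field_simp
  -- Step 2: Chebyshev
  set T : Set (En n) := {x | a < ‖f x‖} with hT_def
  have hTm : MeasurableSet T := measurableSet_lt measurable_const hf.norm
  have hcheb : ∀ R : ℝ, 0 < R → volume (T ∩ cube n 0 R) ≤ ENNReal.ofReal t := by
    intro R hR
    have hsub : T ∩ cube n 0 R ⊆ {x | ENNReal.ofReal (a ^ p) ≤ g x} ∩ cube n 0 R := by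
      apply inter_subset_inter_left
      intro x hx
      exact ENNReal.ofReal_le_ofReal (Real.rpow_le_rpow ha.le (le_of_lt hx) hp.le)
    have hmm : MeasurableSet {x : En n | ENNReal.ofReal (a ^ p) ≤ g x} :=
      measurableSet_le measurable_const hg
    have h6 : volume (T ∩ cube n 0 R)
        ≤ (volume.restrict (cube n 0 R)) {x | ENNReal.ofReal (a ^ p) ≤ g x} := by
      rw [Measure.restrict_apply hmm]
      exact measure_mono hsub
    have h7 := mul_meas_ge_le_lintegral₀ (μ := volume.restrict (cube n 0 R))
      hg.aemeasurable (ENNReal.ofReal (a ^ p))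
    have h8 : (volume.restrict (cube n 0 R)) {x | ENNReal.ofReal (a ^ p) ≤ g x}
        ≤ ENNReal.ofReal ((c ^ p)⁻¹) / ENNReal.ofReal (a ^ p) := by
      rw [ENNReal.le_div_iff_mul_le (Or.inl (by simp [ENNReal.ofReal_eq_zero]; positivity))
        (Or.inl ENNReal.ofReal_ne_top), mul_comm]
      exact le_trans h7 (hcube R hR)
    have h9 : ENNReal.ofReal ((c ^ p)⁻¹) / ENNReal.ofReal (a ^ p) = ENNReal.ofReal t := by
      rw [← ENNReal.ofReal_div_of_pos (by positivity)]
      congr 1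
      rw [hap]
      have hcp : (0:ℝ) < c ^ p := Real.rpow_pos_of_pos hc p
      field_simp
    exact le_trans h6 (le_trans h8 (le_of_eq h9))
  -- Step 3: exhaust ℝⁿ by cubes
  have hcover : T = ⋃ k : ℕ, (T ∩ cube n 0 ((k : ℝ) + 1)) := by
    ext x
    simp only [Set.mem_iUnion, Set.mem_inter_iff]
    constructor
    · intro hx
      refine ⟨⌈2 * ∑ i, |x i|⌉₊, hx, fun i => ?_⟩
      have h0i : (0 : En n) i = 0 := rfl
      rw [h0i, sub_zero]
      have h1 : |x i| ≤ ∑ j, |x j| :=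
        Finset.single_le_sum (fun j _ => abs_nonneg (x j)) (Finset.mem_univ i)
      have h2 : 2 * ∑ j, |x j| ≤ (⌈2 * ∑ j, |x j|⌉₊ : ℝ) := Nat.le_ceil _
      have h3 : (0:ℝ) ≤ ∑ j, |x j| := Finset.sum_nonneg fun j _ => abs_nonneg _
      linarith
    · rintro ⟨k, hx, _⟩; exact hx
  have hmono : Monotone (fun k : ℕ => T ∩ cube n 0 ((k : ℝ) + 1)) := by
    intro k l hkl
    apply inter_subset_inter_right
    apply cube_mono
    have : (k:ℝ) ≤ (l:ℝ) := Nat.cast_le.2 hkl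
    linarith
  have hvolT : volume T ≤ ENNReal.ofReal t := by
    rw [hcover, hmono.measure_iUnion]
    exact iSup_le fun k => hcheb _ (by positivity)
  -- Step 4: conclude
  apply sInf_le
  refine ⟨ENNReal.ofReal_pos.2 ha, ?_⟩
  have : {x : En n | ENNReal.ofReal a < ENNReal.ofReal ‖f x‖} = T := by
    ext x
    simp only [mem_setOf_eq, hT_def]
    exact ENNReal.ofReal_lt_ofReal_iff_of_nonneg ha.le
  rw [this]
  exact hvolT
end Upper

end

/-- If `lim_{t→0⁺} φ(t)=0` and `lim_{t→∞} t^{-n/p} φ(t) = c > 0`, then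
`𝔈_G ℳ_{φ,p}(ℝⁿ)(t) ∼ t^{-1/p}` for `t>0`. -/
theorem statement5 (n : ℕ) (hn : 0 < n) (p : ℝ) (hp : 0 < p) (φ : ℝ → ℝ)
    (hφ : GClass n p φ) (hφ1 : φ 1 = 1)
    (hφ0 : Filter.Tendsto φ (nhdsWithin 0 (Set.Ioi 0)) (nhds 0))
    (hinf : ∃ c : ℝ, 0 < c ∧
      Filter.Tendsto (fun t : ℝ => φ t / t ^ ((n : ℝ) / p)) Filter.atTop (nhds c)) :
    ∃ c₁ c₂ : ℝ, 0 < c₁ ∧ c₁ ≤ c₂ ∧ ∀ t : ℝ, 0 < t →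
      ENNReal.ofReal (c₁ * t ^ (-(1 / p))) ≤ morreyEnvelope n p φ t ∧
      morreyEnvelope n p φ t ≤ ENNReal.ofReal (c₂ * t ^ (-(1 / p))) := by
  obtain ⟨c, hc, hten⟩ := hinf
  have hclb := clb hφ hp hten
  obtain ⟨D, hD2, hDub⟩ := exists_D hc hten
  have hD0 : (0:ℝ) < D := by linarith
  have hKp : 0 < Kp p c := Kp_pos hp hc
  set K : ℝ := Kp p c ^ (1/p) with hK_def
  have hK : 0 < K := Real.rpow_pos_of_pos hKp _
  set F : ℝ := ((4:ℝ) ^ n) ^ (1/p) with hF_def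
  have hF : 0 < F := Real.rpow_pos_of_pos (by positivity) _
  set c₁ : ℝ := min ((K * F)⁻¹) ((K * 2 ^ (1/p))⁻¹) with hc₁_def
  have hc₁ : 0 < c₁ := lt_min (by positivity) (by positivity)
  refine ⟨c₁, max c⁻¹ c₁, hc₁, le_max_right _ _, fun t ht => ?_⟩
  have hKpow : K ^ p = Kp p c := by
    rw [hK_def, ← Real.rpow_mul hKp.le, one_div_mul_cancel hp.ne', Real.rpow_one]
  constructor
  · -- LOWER BOUND
    rcases le_total t 1 with ht1 | ht1
    · -- small t: multi-bump
      obtain ⟨s, hs, hs1, hts, hst⟩ := exists_s hn hp hφ hφ1 hφ0 ht ht1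
      have hφs : 0 < φ s := hφ.pos hs
      have hφsp : (0:ℝ) < φ s ^ p := Real.rpow_pos_of_pos hφs p
      have hsn : (0:ℝ) < s ^ n := pow_pos hs n
      have hcp : (0:ℝ) < c ^ p := Real.rpow_pos_of_pos hc p
      set N : ℕ := ⌊φ s ^ p / s ^ n⌋₊ + 1 with hN_def
      have hNgt : t < (N : ℝ) * s ^ n := by
        have h1 : φ s ^ p / s ^ n < (N : ℝ) := by
          rw [hN_def]; push_cast
          exact Nat.lt_floor_add_one _
        have h2 : φ s ^ p < (N : ℝ) * s ^ n := by
          rw [div_lt_iff₀ hsn] at h1; linarith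
        linarith
      have hs_lb : c ^ p * s ^ n ≤ φ s ^ p := by
        have h5 : (c * s ^ ((n:ℝ)/p)) ^ p ≤ φ s ^ p :=
          Real.rpow_le_rpow (by positivity) (hclb s hs) hp.le
        rwa [Real.mul_rpow hc.le (Real.rpow_nonneg hs.le _), rpow_q_pow hs hp] at h5
      have hNs : (N : ℝ) * s ^ n ≤ (1 + 1/c ^ p) * φ s ^ p := by
        have h1 : (N : ℝ) ≤ φ s ^ p / s ^ n + 1 := by
          rw [hN_def]; push_cast
          have := Nat.floor_le (a := φ s ^ p / s ^ n) (by positivity)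
          linarith
        have h2 : (N : ℝ) * s ^ n ≤ φ s ^ p + s ^ n := by
          calc (N : ℝ) * s ^ n ≤ (φ s ^ p / s ^ n + 1) * s ^ n :=
                mul_le_mul_of_nonneg_right h1 hsn.le
            _ = φ s ^ p + s ^ n := by field_simp
        have h3 : s ^ n ≤ φ s ^ p / c ^ p := (le_div_iff₀ hcp).2 (by linarith)
        calc (N : ℝ) * s ^ n ≤ φ s ^ p + s ^ n := h2
          _ ≤ φ s ^ p + φ s ^ p / c ^ p := by linarith
          _ = (1 + 1/c ^ p) * φ s ^ p := by field_simp
      set A : ℝ := (K * φ s)⁻¹ with hA_def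
      have hA : 0 < A := by positivity
      have hAp : A ^ p = (Kp p c * φ s ^ p)⁻¹ := by
        rw [hA_def, Real.inv_rpow (by positivity),
          Real.mul_rpow hK.le hφs.le, hKpow]
      have hkey := key_master hp hφ hc hclb hD2 hDub hs hs1 hNs
      have hkey' : ∀ r : ℝ, 0 < r →
          φ r ^ p * A ^ p * (min (N : ℝ) ((r + s) / D + 1) * min r s ^ n) ≤ r ^ n := by
        intro r hr
        have h := hkey r hr
        have hKφ : (0:ℝ) < Kp p c * φ s ^ p := by positivity
        rw [hAp]
        calc φ r ^ p * (Kp p c * φ s ^ p)⁻¹ * (min (N : ℝ) ((r + s) / D + 1) * min r s ^ n)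
            = (φ r ^ p * (min (N : ℝ) ((r + s) / D + 1) * min r s ^ n)) * (Kp p c * φ s ^ p)⁻¹ := by
              ring
          _ ≤ (Kp p c * φ s ^ p * r ^ n) * (Kp p c * φ s ^ p)⁻¹ :=
              mul_le_mul_of_nonneg_right h (by positivity)
          _ = r ^ n := by field_simp
      set S : Set (En n) := ⋃ j ∈ Finset.range N, cube n (ctr n D j) s with hS_def
      have hSmeas : MeasurableSet S :=
        Finset.measurableSet_biUnion _ fun j _ => measurableSet_cube n _ s
      have hfmeas : Measurable (S.indicator fun _ => A) :=
        measurable_const.indicator hSmeas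
      have hnorm : morreyNorm n p φ (S.indicator fun _ => A) ≤ 1 :=
        morreyNorm_indicator_le hn hp φ (fun r hr => hφ.pos hr) hs hD0 hA N hkey'
      have hvolS : ENNReal.ofReal t < volume S := by
        rw [hS_def, vol_union hn hs (by linarith) N]
        exact (ENNReal.ofReal_lt_ofReal_iff (by positivity)).2 hNgt
      have hre : ENNReal.ofReal A ≤ rearr n (S.indicator fun _ => A) t :=
        rearr_ge_of_indicator hA hvolS
      have hAlb : c₁ * t ^ (-(1/p)) ≤ A := by
        have hφsub : φ s ≤ F * t ^ (1/p) := by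
          have h1 : φ s = (φ s ^ p) ^ (1/p) := by
            rw [← Real.rpow_mul hφs.le, mul_one_div_cancel hp.ne', Real.rpow_one]
          rw [h1, hF_def, ← Real.mul_rpow (by positivity) ht.le]
          exact Real.rpow_le_rpow (by positivity) hst (by positivity)
        have h2 : K * φ s ≤ (K * F) * t ^ (1/p) := by
          calc K * φ s ≤ K * (F * t ^ (1/p)) := mul_le_mul_of_nonneg_left hφsub hK.le
            _ = (K * F) * t ^ (1/p) := by ring
        have h3 : A ≥ ((K * F) * t ^ (1/p))⁻¹ := by
          rw [hA_def]
          exact inv_anti₀ (by positivity) h2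
        have h4 : ((K * F) * t ^ (1/p))⁻¹ = (K * F)⁻¹ * t ^ (-(1/p)) := by
          rw [mul_inv, ← Real.rpow_neg ht.le]
        calc c₁ * t ^ (-(1/p)) ≤ (K * F)⁻¹ * t ^ (-(1/p)) :=
              mul_le_mul_of_nonneg_right (min_le_left _ _) (Real.rpow_nonneg ht.le _)
          _ = ((K * F) * t ^ (1/p))⁻¹ := h4.symm
          _ ≤ A := h3
      calc ENNReal.ofReal (c₁ * t ^ (-(1/p))) ≤ ENNReal.ofReal A :=
            ENNReal.ofReal_le_ofReal hAlb
        _ ≤ rearr n (S.indicator fun _ => A) t := hre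
        _ ≤ morreyEnvelope n p φ t := by
            rw [morreyEnvelope]
            exact le_iSup_of_le (S.indicator fun _ => A)
              (le_iSup_of_le hfmeas (le_iSup_of_le hnorm le_rfl))
    · -- large t: single bump
      set s : ℝ := (2*t) ^ ((n:ℝ)⁻¹) with hs_def
      have h2t : (1:ℝ) ≤ 2*t := by linarith
      have hs : 0 < s := Real.rpow_pos_of_pos (by linarith) _
      have hs1 : 1 ≤ s := Real.one_le_rpow h2t (by positivity)
      have hsn : s ^ n = 2*t := by
        rw [hs_def, ← Real.rpow_natCast ((2*t) ^ ((n:ℝ)⁻¹)) n, ← Real.rpow_mul (by linarith),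
          inv_mul_cancel₀ (Nat.cast_ne_zero.2 hn.ne'), Real.rpow_one]
      set D' : ℝ := s + 1 with hD'_def
      have hD'0 : (0:ℝ) < D' := by linarith
      have hφs : 0 < φ s := hφ.pos hs
      have hφsp : (0:ℝ) < φ s ^ p := Real.rpow_pos_of_pos hφs p
      set A : ℝ := (K * φ s)⁻¹ with hA_def
      have hA : 0 < A := by positivity
      have hAp : A ^ p = (Kp p c * φ s ^ p)⁻¹ := by
        rw [hA_def, Real.inv_rpow (by positivity),
          Real.mul_rpow hK.le hφs.le, hKpow]
      have hkey := key_single hp hφ hs hD'0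
      have hkey' : ∀ r : ℝ, 0 < r →
          φ r ^ p * A ^ p * (min ((1:ℕ) : ℝ) ((r + s) / D' + 1) * min r s ^ n) ≤ r ^ n := by
        intro r hr
        have h := hkey r hr
        have h2 : φ s ^ p * r ^ n ≤ Kp p c * φ s ^ p * r ^ n := by
          have h3 : (1:ℝ) ≤ Kp p c := le_trans (by norm_num) Kp_ge_three
          have h4 := mul_le_mul_of_nonneg_right
            (mul_le_mul_of_nonneg_right h3 hφsp.le) (pow_pos hr n).le
          nlinarith [h4]
        have hKφ : (0:ℝ) < Kp p c * φ s ^ p := by positivity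
        rw [hAp]
        calc φ r ^ p * (Kp p c * φ s ^ p)⁻¹ * (min ((1:ℕ) : ℝ) ((r + s) / D' + 1) * min r s ^ n)
            = (φ r ^ p * (min ((1:ℕ) : ℝ) ((r + s) / D' + 1) * min r s ^ n)) * (Kp p c * φ s ^ p)⁻¹ := by
              ring
          _ ≤ (Kp p c * φ s ^ p * r ^ n) * (Kp p c * φ s ^ p)⁻¹ :=
              mul_le_mul_of_nonneg_right (le_trans h h2) (by positivity)
          _ = r ^ n := by field_simp
      set S : Set (En n) := ⋃ j ∈ Finset.range 1, cube n (ctr n D' j) s with hS_def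
      have hSmeas : MeasurableSet S :=
        Finset.measurableSet_biUnion _ fun j _ => measurableSet_cube n _ s
      have hfmeas : Measurable (S.indicator fun _ => A) :=
        measurable_const.indicator hSmeas
      have hnorm : morreyNorm n p φ (S.indicator fun _ => A) ≤ 1 :=
        morreyNorm_indicator_le hn hp φ (fun r hr => hφ.pos hr) hs hD'0 hA 1 hkey'
      have hvolS : ENNReal.ofReal t < volume S := by
        rw [hS_def, vol_union hn hs (by linarith) 1]
        apply (ENNReal.ofReal_lt_ofReal_iff (by push_cast; rw [hsn]; linarith)).2
        push_cast; rw [hsn]; linarith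
      have hre : ENNReal.ofReal A ≤ rearr n (S.indicator fun _ => A) t :=
        rearr_ge_of_indicator hA hvolS
      have hAlb : c₁ * t ^ (-(1/p)) ≤ A := by
        have hφsub : φ s ≤ 2 ^ (1/p) * t ^ (1/p) := by
          have h1 : φ s ≤ φ 1 * (s/1) ^ ((n:ℝ)/p) := hφ.grow one_pos hs1
          rw [hφ1, one_mul, div_one] at h1
          have h2 : s ^ ((n:ℝ)/p) = (2*t) ^ (1/p) := by
            rw [hs_def, ← Real.rpow_mul (by linarith)]
            congr 1
            field_simp
          rw [h2] at h1
          rwa [Real.mul_rpow (by norm_num) ht.le] at h1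
        have h2 : K * φ s ≤ (K * 2 ^ (1/p)) * t ^ (1/p) := by
          calc K * φ s ≤ K * (2 ^ (1/p) * t ^ (1/p)) := mul_le_mul_of_nonneg_left hφsub hK.le
            _ = (K * 2 ^ (1/p)) * t ^ (1/p) := by ring
        have h3 : A ≥ ((K * 2 ^ (1/p)) * t ^ (1/p))⁻¹ := by
          rw [hA_def]
          exact inv_anti₀ (by positivity) h2
        have h4 : ((K * 2 ^ (1/p)) * t ^ (1/p))⁻¹ = (K * 2 ^ (1/p))⁻¹ * t ^ (-(1/p)) := by
          rw [mul_inv, ← Real.rpow_neg ht.le]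
        calc c₁ * t ^ (-(1/p)) ≤ (K * 2 ^ (1/p))⁻¹ * t ^ (-(1/p)) :=
              mul_le_mul_of_nonneg_right (min_le_right _ _) (Real.rpow_nonneg ht.le _)
          _ = ((K * 2 ^ (1/p)) * t ^ (1/p))⁻¹ := h4.symm
          _ ≤ A := h3
      calc ENNReal.ofReal (c₁ * t ^ (-(1/p))) ≤ ENNReal.ofReal A :=
            ENNReal.ofReal_le_ofReal hAlb
        _ ≤ rearr n (S.indicator fun _ => A) t := hre
        _ ≤ morreyEnvelope n p φ t := by
            rw [morreyEnvelope]
            exact le_iSup_of_le (S.indicator fun _ => A)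
              (le_iSup_of_le hfmeas (le_iSup_of_le hnorm le_rfl))
  · -- UPPER BOUND
    calc morreyEnvelope n p φ t ≤ ENNReal.ofReal (c⁻¹ * t ^ (-(1/p))) :=
          envelope_upper hn hp hφ hc hclb ht
      _ ≤ ENNReal.ofReal (max c⁻¹ c₁ * t ^ (-(1/p))) := by
          apply ENNReal.ofReal_le_ofReal
          exact mul_le_mul_of_nonneg_right (le_max_left _ _) (Real.rpow_nonneg ht.le _)
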